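/- Dirichlet principle for non-reversible finite chains: for distinct states a ≠ b in a finite irreducible Markov chain, Cap({a},{b}) = inf over f : E → ℝ with f(a)=1, f(b)=0 of ⟨f, L(−S)^{-1}L* f⟩_μ, where Cap({a},{b}) = μ(a)λ(a) P_a[T_a⁺ > T_b⁺]. -/

import Mathlib

open Finset

/-- The generator associated to jump rates `q`: `(L f)(x) = ∑ y, q x y * (f y - f x)`. -/
noncomputable def Ld {E : Type*} [Fintype E] (q : E → E → ℝ) (f : E → ℝ) (x : E) : ℝ :=
  ∑ y, q x y * (f y - f x)

/-- The adjoint jump rates: `r* x y = μ y * r y x / μ x`. -/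
noncomputable def adjRates {E : Type*} (r : E → E → ℝ) (μ : E → ℝ) : E → E → ℝ :=
  fun x y => μ y * r y x / μ x

/-- The symmetric part of the generator: `S = (L + L*) / 2`. -/
noncomputable def symOp {E : Type*} [Fintype E] (r : E → E → ℝ) (μ : E → ℝ)
    (f : E → ℝ) (x : E) : ℝ :=
  (Ld r f x + Ld (adjRates r μ) f x) / 2

namespace DirAux
variable {E : Type*} [Fintype E]

lemma stat_swap (μ : E → ℝ) (q : E → E → ℝ)
    (hstatq : ∀ y, ∑ x, μ x * q x y = μ y * ∑ x, q y x) (h : E → ℝ) :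
    ∑ x, ∑ y, μ x * q x y * h y = ∑ x, ∑ y, μ x * q x y * h x := by
  rw [Finset.sum_comm]
  calc ∑ y, ∑ x, μ x * q x y * h y
      = ∑ y, (∑ x, μ x * q x y) * h y := by
        refine Finset.sum_congr rfl fun y _ => ?_
        rw [Finset.sum_mul]
    _ = ∑ y, (μ y * ∑ x, q y x) * h y := by
        refine Finset.sum_congr rfl fun y _ => ?_
        rw [hstatq y]
    _ = ∑ x, ∑ y, μ x * q x y * h x := by
        refine Finset.sum_congr rfl fun y _ => ?_
        rw [Finset.mul_sum, Finset.sum_mul]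

lemma master (μ : E → ℝ) (q : E → E → ℝ)
    (hstatq : ∀ y, ∑ x, μ x * q x y = μ y * ∑ x, q y x)
    (F G : E → E → ℝ) (h : E → ℝ)
    (hpt : ∀ x y, F x y = G x y + μ x * q x y * h y - μ x * q x y * h x) :
    ∑ x, ∑ y, F x y = ∑ x, ∑ y, G x y := by
  have hs := stat_swap μ q hstatq h
  have step : ∀ x, ∑ y, F x y
      = ∑ y, G x y + ∑ y, μ x * q x y * h y - ∑ y, μ x * q x y * h x := by
    intro x
    rw [← Finset.sum_add_distrib, ← Finset.sum_sub_distrib]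
    exact Finset.sum_congr rfl fun y _ => hpt x y
  calc ∑ x, ∑ y, F x y
      = ∑ x, (∑ y, G x y + ∑ y, μ x * q x y * h y - ∑ y, μ x * q x y * h x) :=
        Finset.sum_congr rfl fun x _ => step x
    _ = ∑ x, ∑ y, G x y + ∑ x, ∑ y, μ x * q x y * h y
        - ∑ x, ∑ y, μ x * q x y * h x := by
        rw [← Finset.sum_add_distrib, ← Finset.sum_sub_distrib]
    _ = ∑ x, ∑ y, G x y := by rw [hs]; ring

lemma Ld_comb (q : E → E → ℝ) (F G : E → ℝ) (s t : ℝ) (x : E) :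
    Ld q (fun z => s * F z + t * G z) x = s * Ld q F x + t * Ld q G x := by
  simp only [Ld]
  rw [Finset.mul_sum, Finset.mul_sum, ← Finset.sum_add_distrib]
  exact Finset.sum_congr rfl fun y _ => by ring

lemma Ld_const (q : E → E → ℝ) (c : ℝ) (x : E) :
    Ld q (fun _ => c) x = 0 := by simp [Ld]

lemma inner_Ld_expand (μ g f : E → ℝ) (q : E → E → ℝ) :
    ∑ x, μ x * g x * Ld q f x = ∑ x, ∑ y, μ x * g x * (q x y * (f y - f x)) := by
  refine Finset.sum_congr rfl fun x _ => ?_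
  rw [Ld, Finset.mul_sum]

lemma adjoint_id (μ : E → ℝ) (r : E → E → ℝ) (hμ : ∀ x, 0 < μ x)
    (hstat : ∀ y, ∑ x, μ x * r x y = μ y * ∑ x, r y x) (f g : E → ℝ) :
    ∑ x, μ x * g x * Ld (adjRates r μ) f x = ∑ x, μ x * f x * Ld r g x := by
  rw [inner_Ld_expand, inner_Ld_expand]
  calc ∑ x, ∑ y, μ x * g x * (adjRates r μ x y * (f y - f x))
      = ∑ x, ∑ y, μ y * r y x * g x * (f y - f x) := by
        refine Finset.sum_congr rfl fun x _ => Finset.sum_congr rfl fun y _ => ?_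
        have hx := (hμ x).ne'
        rw [adjRates]
        field_simp
    _ = ∑ y, ∑ x, μ y * r y x * g x * (f y - f x) := Finset.sum_comm
    _ = ∑ x, ∑ y, μ x * f x * (r x y * (g y - g x)) := by
        apply master μ r hstat _ _ (fun x => -(f x * g x))
        intro x y
        ring

lemma sum_Ld (μ : E → ℝ) (q : E → E → ℝ)
    (hstatq : ∀ y, ∑ x, μ x * q x y = μ y * ∑ x, q y x) (f : E → ℝ) :
    ∑ x, μ x * Ld q f x = 0 := by
  have e1 : ∑ x, μ x * Ld q f x = ∑ x, ∑ y, μ x * q x y * (f y - f x) := by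
    refine Finset.sum_congr rfl fun x _ => ?_
    rw [Ld, Finset.mul_sum]
    exact Finset.sum_congr rfl fun y _ => by ring
  rw [e1, master μ q hstatq _ (fun _ _ => (0:ℝ)) f (by intro x y; ring)]
  simp

lemma dirichlet_id (μ : E → ℝ) (q : E → E → ℝ)
    (hstatq : ∀ y, ∑ x, μ x * q x y = μ y * ∑ x, q y x) (f : E → ℝ) :
    ∑ x, μ x * f x * (-(Ld q f x))
      = (∑ x, ∑ y, μ x * q x y * (f y - f x) ^ 2) / 2 := by
  have e1 : ∑ x, μ x * f x * (-(Ld q f x))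
      = ∑ x, ∑ y, -(μ x * f x * (q x y * (f y - f x))) := by
    refine Finset.sum_congr rfl fun x _ => ?_
    rw [Ld, mul_neg, Finset.mul_sum, ← Finset.sum_neg_distrib]
  rw [e1, master μ q hstatq _ (fun x y => μ x * q x y * (f y - f x) ^ 2 / 2)
      (fun x => -(f x ^ 2) / 2) (by intro x y; ring)]
  rw [Finset.sum_div]
  exact Finset.sum_congr rfl fun x _ => by rw [Finset.sum_div]

lemma adj_stat (μ : E → ℝ) (r : E → E → ℝ) (hμ : ∀ x, 0 < μ x)
    (hstat : ∀ y, ∑ x, μ x * r x y = μ y * ∑ x, r y x) :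
    ∀ y, ∑ x, μ x * adjRates r μ x y = μ y * ∑ x, adjRates r μ y x := by
  intro y
  have l : ∑ x, μ x * adjRates r μ x y = μ y * ∑ x, r y x := by
    rw [Finset.mul_sum]
    refine Finset.sum_congr rfl fun x _ => ?_
    have hx := (hμ x).ne'
    rw [adjRates]; field_simp
  have rr : μ y * ∑ x, adjRates r μ y x = ∑ x, μ x * r x y := by
    rw [Finset.mul_sum]
    refine Finset.sum_congr rfl fun x _ => ?_
    have hy := (hμ y).ne'
    rw [adjRates]; field_simp
  rw [l, rr, hstat y]

lemma adj_nonneg (μ : E → ℝ) (r : E → E → ℝ) (hμ : ∀ x, 0 < μ x)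
    (hr : ∀ x y, 0 ≤ r x y) : ∀ x y, 0 ≤ adjRates r μ x y := by
  intro x y
  exact div_nonneg (mul_nonneg (hμ y).le (hr y x)) (hμ x).le

lemma dir_nonneg (μ : E → ℝ) (q : E → E → ℝ) (hμ : ∀ x, 0 < μ x)
    (hq : ∀ x y, 0 ≤ q x y) (f : E → ℝ) :
    0 ≤ ∑ x, ∑ y, μ x * q x y * (f y - f x) ^ 2 :=
  Finset.sum_nonneg fun x _ => Finset.sum_nonneg fun y _ =>
    mul_nonneg (mul_nonneg (hμ x).le (hq x y)) (sq_nonneg _)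

lemma dir_zero_pairs (μ : E → ℝ) (q : E → E → ℝ) (hμ : ∀ x, 0 < μ x)
    (hq : ∀ x y, 0 ≤ q x y) (f : E → ℝ)
    (h0 : ∑ x, ∑ y, μ x * q x y * (f y - f x) ^ 2 = 0) :
    ∀ x y, μ x * q x y * (f y - f x) ^ 2 = 0 := by
  intro x y
  have hx := (Finset.sum_eq_zero_iff_of_nonneg (fun x _ =>
    Finset.sum_nonneg fun y _ =>
      mul_nonneg (mul_nonneg (hμ x).le (hq x y)) (sq_nonneg _))).mp h0 x (mem_univ x)
  exact (Finset.sum_eq_zero_iff_of_nonneg (fun y _ =>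
    mul_nonneg (mul_nonneg (hμ x).le (hq x y)) (sq_nonneg _))).mp hx y (mem_univ y)


lemma Ld_surj (μ : E → ℝ) (q : E → E → ℝ) (hμ : ∀ x, 0 < μ x)
    (hstatq : ∀ y, ∑ x, μ x * q x y = μ y * ∑ x, q y x)
    (hker : ∀ f : E → ℝ, (∀ x, Ld q f x = 0) → ∀ x y : E, f x = f y)
    (x0 : E) (g : E → ℝ) (hg : ∑ x, μ x * g x = 0) :
    ∃ u : E → ℝ, ∀ x, Ld q u x = g x := by
  classical
  let T : (E → ℝ) →ₗ[ℝ] (E → ℝ) :=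
    { toFun := fun f => fun x => Ld q f x
      map_add' := by
        intro f h; funext x
        simp only [Ld, Pi.add_apply]
        rw [← Finset.sum_add_distrib]
        exact Finset.sum_congr rfl fun y _ => by ring
      map_smul' := by
        intro c f; funext x
        simp only [Ld, Pi.smul_apply, smul_eq_mul, RingHom.id_apply]
        rw [Finset.mul_sum]
        exact Finset.sum_congr rfl fun y _ => by ring }
  let φ : (E → ℝ) →ₗ[ℝ] ℝ :=
    { toFun := fun f => ∑ x, μ x * f x
      map_add' := by
        intro f h
        simp only [Pi.add_apply, mul_add]
        rw [Finset.sum_add_distrib]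
      map_smul' := by
        intro c f
        simp only [Pi.smul_apply, smul_eq_mul, RingHom.id_apply, Finset.mul_sum]
        exact Finset.sum_congr rfl fun x _ => by ring }
  have hTapp : ∀ f x, T f x = Ld q f x := fun f x => rfl
  have hφapp : ∀ f, φ f = ∑ x, μ x * f x := fun f => rfl
  -- kernel of T is the span of constants
  have hone : (fun _ => (1:ℝ)) ≠ (0 : E → ℝ) := by
    intro h0
    have := congrFun h0 x0
    norm_num at this
  have hker_eq : LinearMap.ker T = Submodule.span ℝ {(fun _ => (1:ℝ) : E → ℝ)} := by
    apply le_antisymm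
    · intro f hf
      have hf0 : T f = 0 := LinearMap.mem_ker.mp hf
      have hf' : ∀ x, Ld q f x = 0 := fun x => by
        have := congrFun hf0 x; simpa [hTapp] using this
      have hc := hker f hf'
      have hfe : f = (f x0) • (fun _ => (1:ℝ)) := by
        funext x
        simp [hc x x0]
      rw [hfe]
      exact Submodule.smul_mem _ _ (Submodule.mem_span_singleton_self _)
    · rw [Submodule.span_le]
      intro v hv
      rw [Set.mem_singleton_iff] at hv
      subst hv
      rw [SetLike.mem_coe, LinearMap.mem_ker]
      funext x
      simp [hTapp, Ld]
  have hμsum : 0 < ∑ x, μ x :=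
    Finset.sum_pos (fun x _ => hμ x) ⟨x0, Finset.mem_univ x0⟩
  have hφsurj : Function.Surjective φ := by
    intro c
    refine ⟨fun _ => c / ∑ x, μ x, ?_⟩
    rw [hφapp, ← Finset.sum_mul]
    field_simp
  -- finrank computations
  have hn : Module.finrank ℝ (E → ℝ) = Fintype.card E :=
    Module.finrank_fintype_fun_eq_card ℝ
  have hkerT : Module.finrank ℝ (LinearMap.ker T) = 1 := by
    rw [hker_eq]
    exact finrank_span_singleton hone
  have hrangeφ : LinearMap.range φ = ⊤ := LinearMap.range_eq_top.mpr hφsurj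
  have hrnT := LinearMap.finrank_range_add_finrank_ker T
  have hrnφ := LinearMap.finrank_range_add_finrank_ker φ
  have hrφ : Module.finrank ℝ (LinearMap.range φ) = 1 := by
    rw [hrangeφ]
    rw [finrank_top]
    exact Module.finrank_self ℝ
  have hle : LinearMap.range T ≤ LinearMap.ker φ := by
    rintro v ⟨f, rfl⟩
    rw [LinearMap.mem_ker, hφapp]
    have : ∀ x, T f x = Ld q f x := fun x => rfl
    calc ∑ x, μ x * (T f) x = ∑ x, μ x * Ld q f x :=
          Finset.sum_congr rfl fun x _ => by rw [this x]
      _ = 0 := sum_Ld μ q hstatq f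
  have heq : LinearMap.range T = LinearMap.ker φ := by
    apply Submodule.eq_of_le_of_finrank_le hle
    omega
  have hgmem : g ∈ LinearMap.range T := by
    rw [heq, LinearMap.mem_ker, hφapp]
    exact hg
  obtain ⟨u, hu⟩ := hgmem
  exact ⟨u, fun x => by rw [← hTapp u x, hu]⟩


lemma inner_neg (μ g t : E → ℝ) :
    ∑ x, μ x * g x * (-(t x)) = -∑ x, μ x * g x * t x := by
  rw [← Finset.sum_neg_distrib]
  exact Finset.sum_congr rfl fun x _ => by ring

lemma sym_split (μ : E → ℝ) (r : E → E → ℝ) (g h : E → ℝ) :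
    ∑ x, μ x * g x * (-(symOp r μ h x))
      = -((∑ x, μ x * g x * Ld r h x) + (∑ x, μ x * g x * Ld (adjRates r μ) h x)) / 2 := by
  calc ∑ x, μ x * g x * (-(symOp r μ h x))
      = ∑ x, -((μ x * g x * Ld r h x + μ x * g x * Ld (adjRates r μ) h x) / 2) :=
        Finset.sum_congr rfl fun x _ => by rw [symOp]; ring
    _ = -((∑ x, μ x * g x * Ld r h x) + (∑ x, μ x * g x * Ld (adjRates r μ) h x)) / 2 := by
        rw [Finset.sum_neg_distrib, ← Finset.sum_div, Finset.sum_add_distrib, neg_div]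

lemma sym_symm (μ : E → ℝ) (r : E → E → ℝ) (hμ : ∀ x, 0 < μ x)
    (hstat : ∀ y, ∑ x, μ x * r x y = μ y * ∑ x, r y x) (g h : E → ℝ) :
    ∑ x, μ x * g x * (-(symOp r μ h x)) = ∑ x, μ x * h x * (-(symOp r μ g x)) := by
  rw [sym_split, sym_split]
  have h1 := adjoint_id μ r hμ hstat h g
  have h2 := adjoint_id μ r hμ hstat g h
  rw [h1, ← h2]
  ring

lemma quad_eq (μ : E → ℝ) (r : E → E → ℝ) (hμ : ∀ x, 0 < μ x)
    (hstat : ∀ y, ∑ x, μ x * r x y = μ y * ∑ x, r y x) (f : E → ℝ) :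
    ∑ x, μ x * f x * (-(symOp r μ f x)) = ∑ x, μ x * f x * (-(Ld r f x)) := by
  rw [sym_split, adjoint_id μ r hμ hstat f f, inner_neg]
  ring

lemma sym_nonneg (μ : E → ℝ) (r : E → E → ℝ) (hμ : ∀ x, 0 < μ x)
    (hr : ∀ x y, 0 ≤ r x y)
    (hstat : ∀ y, ∑ x, μ x * r x y = μ y * ∑ x, r y x) (g : E → ℝ) :
    0 ≤ ∑ x, μ x * g x * (-(symOp r μ g x)) := by
  rw [quad_eq μ r hμ hstat, dirichlet_id μ r hstat]
  have := dir_nonneg μ r hμ hr g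
  linarith

lemma symOp_comb (r : E → E → ℝ) (μ : E → ℝ) (g h : E → ℝ) (t : ℝ) (x : E) :
    symOp r μ (fun z => g z + t * h z) x = symOp r μ g x + t * symOp r μ h x := by
  have e : (fun z => g z + t * h z) = (fun z => (1:ℝ) * g z + t * h z) := by
    funext z; ring
  rw [symOp, symOp, symOp, e, Ld_comb, Ld_comb]
  ring

lemma cs_ineq (μ : E → ℝ) (r : E → E → ℝ) (hμ : ∀ x, 0 < μ x)
    (hr : ∀ x y, 0 ≤ r x y)
    (hstat : ∀ y, ∑ x, μ x * r x y = μ y * ∑ x, r y x) (g h : E → ℝ) :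
    (∑ x, μ x * g x * (-(symOp r μ h x))) ^ 2
      ≤ (∑ x, μ x * g x * (-(symOp r μ g x))) * (∑ x, μ x * h x * (-(symOp r μ h x))) := by
  set Bgg := ∑ x, μ x * g x * (-(symOp r μ g x)) with hBgg
  set Bgh := ∑ x, μ x * g x * (-(symOp r μ h x)) with hBgh
  set Bhh := ∑ x, μ x * h x * (-(symOp r μ h x)) with hBhh
  have key : ∀ t : ℝ, 0 ≤ Bhh * (t * t) + (2 * Bgh) * t + Bgg := by
    intro t
    have h0 := sym_nonneg μ r hμ hr hstat (fun z => g z + t * h z)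
    have hexp : ∑ x, μ x * (g x + t * h x) * (-(symOp r μ (fun z => g z + t * h z) x))
        = Bgg + t * Bgh + t * (∑ x, μ x * h x * (-(symOp r μ g x))) + t ^ 2 * Bhh := by
      calc ∑ x, μ x * (g x + t * h x) * (-(symOp r μ (fun z => g z + t * h z) x))
          = ∑ x, (μ x * g x * (-(symOp r μ g x)) + t * (μ x * g x * (-(symOp r μ h x)))
              + t * (μ x * h x * (-(symOp r μ g x))) + t ^ 2 * (μ x * h x * (-(symOp r μ h x)))) := by
            refine Finset.sum_congr rfl fun x _ => ?_
            rw [symOp_comb]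
            ring
        _ = Bgg + t * Bgh + t * (∑ x, μ x * h x * (-(symOp r μ g x))) + t ^ 2 * Bhh := by
            rw [Finset.sum_add_distrib, Finset.sum_add_distrib, Finset.sum_add_distrib,
              ← Finset.mul_sum, ← Finset.mul_sum, ← Finset.mul_sum]
    have hsym := sym_symm μ r hμ hstat h g
    rw [hexp] at h0
    rw [hsym, ← hBgh] at h0
    nlinarith [h0]
  have hd := discrim_le_zero key
  rw [discrim] at hd
  nlinarith [hd]

lemma support_ab (a b : E) (hab : a ≠ b) (h : E → ℝ)
    (h0 : ∀ x, x ≠ a → x ≠ b → h x = 0) :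
    ∑ x, h x = h a + h b := by
  classical
  have hs := Finset.sum_subset (Finset.subset_univ ({a, b} : Finset E))
    (fun x _ hx => h0 x (fun e => hx (by simp [e])) (fun e => hx (by simp [e])))
  rw [← hs, Finset.sum_pair hab]

end DirAux

/-- **Dirichlet principle for non-reversible finite chains.**
For distinct states `a ≠ b` of a finite irreducible Markov chain, the
capacity `Cap({a},{b}) = ⟨V_{a,b}, (-L) V_{a,b}⟩_μ` (where `V_{a,b}` is the
`L`-harmonic function on `E ∖ {a,b}` with `V a = 1`, `V b = 0`) is the
minimum over `f` with `f a = 1`, `f b = 0` of `⟨f, L (-S)⁻¹ L* f⟩_μ`; the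
latter quadratic form is encoded by a solution `W` of `S W = L* f`, giving
`⟨f, L (-S)⁻¹ L* f⟩_μ = ⟨W, (-S) W⟩_μ`. -/
theorem dirichlet_principle_nonreversible {E : Type*} [Fintype E]
    (r : E → E → ℝ) (μ : E → ℝ) (a b : E) (hab : a ≠ b)
    (hr : ∀ x y, 0 ≤ r x y) (hrdiag : ∀ x, r x x = 0)
    (hμ : ∀ x, 0 < μ x)
    (hstat : ∀ y, ∑ x, μ x * r x y = μ y * ∑ x, r y x)
    (hirr : ∀ h : E → ℝ,
      (∀ x y, 0 < μ x * r x y + μ y * r y x → h x = h y) → ∀ x y, h x = h y)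
    (hSsurj : ∀ g : E → ℝ, (∑ x, μ x * g x = 0) →
      ∃ W : E → ℝ, ∀ x, symOp r μ W x = g x)
    (V : E → ℝ) (hVa : V a = 1) (hVb : V b = 0)
    (hVharm : ∀ x, x ≠ a → x ≠ b → Ld r V x = 0) :
    IsLeast
      { v : ℝ | ∃ f W : E → ℝ, f a = 1 ∧ f b = 0 ∧
          (∀ x, symOp r μ W x = Ld (adjRates r μ) f x) ∧
          v = ∑ x, μ x * W x * (-(symOp r μ W x)) }
      (∑ x, μ x * V x * (-(Ld r V x))) := by
  classical
  have hstat' := DirAux.adj_stat μ r hμ hstat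
  have hr' := DirAux.adj_nonneg μ r hμ hr
  have pairs_const : ∀ f : E → ℝ,
      (∀ x y, μ x * r x y * (f y - f x) ^ 2 = 0) → ∀ x y, f x = f y := by
    intro f hp
    apply hirr f
    intro x y hxy
    rcases lt_or_ge 0 (μ x * r x y) with hpos | hle
    · have h2 := hp x y
      have hz : (f y - f x) ^ 2 = 0 := by
        rcases mul_eq_zero.mp h2 with h | h
        · exact absurd h hpos.ne'
        · exact h
      have := (pow_eq_zero_iff two_ne_zero).mp hz
      have := sub_eq_zero.mp this
      linarith
    · have hpos2 : 0 < μ y * r y x := by linarith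
      have h2 := hp y x
      have hz : (f x - f y) ^ 2 = 0 := by
        rcases mul_eq_zero.mp h2 with h | h
        · exact absurd h hpos2.ne'
        · exact h
      have := (pow_eq_zero_iff two_ne_zero).mp hz
      have := sub_eq_zero.mp this
      linarith
  set Cap := ∑ x, μ x * V x * (-(Ld r V x)) with hCapdef
  have hCapdir : Cap = (∑ x, ∑ y, μ x * r x y * (V y - V x) ^ 2) / 2 :=
    DirAux.dirichlet_id μ r hstat V
  have hCappos : 0 < Cap := by
    rcases (DirAux.dir_nonneg μ r hμ hr V).lt_or_eq with hlt | heq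
    · rw [hCapdir]; linarith
    · exfalso
      have hz := DirAux.dir_zero_pairs μ r hμ hr V heq.symm
      have := pairs_const V hz a b
      rw [hVa, hVb] at this; norm_num at this
  have hsupp : ∀ w : E → ℝ, ∑ x, μ x * w x * Ld r V x
      = μ a * w a * Ld r V a + μ b * w b * Ld r V b := by
    intro w
    exact DirAux.support_ab a b hab _ (fun x hxa hxb => by rw [hVharm x hxa hxb]; ring)
  have hLVsum : μ a * Ld r V a + μ b * Ld r V b = 0 := by
    have h1 := DirAux.sum_Ld μ r hstat V
    have h2 := DirAux.support_ab a b hab (fun x => μ x * Ld r V x)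
      (fun x hxa hxb => by show μ x * Ld r V x = 0; rw [hVharm x hxa hxb]; ring)
    rw [h2] at h1
    exact h1
  have hCapA : Cap = -(μ a * Ld r V a) := by
    have h3 := DirAux.inner_neg μ V (fun x => Ld r V x)
    rw [hCapdef, h3, hsupp V, hVa, hVb]
    ring
  -- kernel property for the adjoint rates
  have hkerstar : ∀ f : E → ℝ, (∀ x, Ld (adjRates r μ) f x = 0) → ∀ x y, f x = f y := by
    intro f hf
    have h0 : ∑ x, μ x * f x * (-(Ld (adjRates r μ) f x)) = 0 :=
      Finset.sum_eq_zero fun x _ => by rw [hf x]; ring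
    rw [DirAux.dirichlet_id μ _ hstat' f] at h0
    have hz := DirAux.dir_zero_pairs μ _ hμ hr' f (by linarith)
    apply pairs_const f
    intro x y
    have h1 := hz y x
    have e : μ y * adjRates r μ y x = μ x * r x y := by
      have hy := (hμ y).ne'
      rw [adjRates]
      field_simp
    calc μ x * r x y * (f y - f x) ^ 2
        = μ y * adjRates r μ y x * (f x - f y) ^ 2 := by rw [e]; ring
      _ = 0 := h1
  set g1 : E → ℝ := fun x => (if x = a then 1 / μ a else 0) - (if x = b then 1 / μ b else 0)
    with hg1def
  have hite : ∀ w : E → ℝ, ∑ x, μ x * w x * g1 x = w a - w b := by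
    intro w
    have h1 : ∀ c : E, ∑ x, μ x * w x * (if x = c then 1 / μ c else 0) = w c := by
      intro c
      have hc := (hμ c).ne'
      calc ∑ x, μ x * w x * (if x = c then 1 / μ c else 0)
          = ∑ x, (if x = c then μ x * w x * (1 / μ c) else 0) :=
            Finset.sum_congr rfl fun x _ => by split <;> simp
        _ = μ c * w c * (1 / μ c) := by rw [Finset.sum_ite_eq']; simp
        _ = w c := by field_simp
    calc ∑ x, μ x * w x * g1 x
        = ∑ x, (μ x * w x * (if x = a then 1 / μ a else 0)
            - μ x * w x * (if x = b then 1 / μ b else 0)) :=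
          Finset.sum_congr rfl fun x _ => by simp only [hg1def]; ring
      _ = w a - w b := by rw [Finset.sum_sub_distrib, h1 a, h1 b]
  have hg1sum : ∑ x, μ x * g1 x = 0 := by
    have h5 := hite fun _ => (1 : ℝ)
    simp only [mul_one] at h5
    rw [h5]
    ring
  obtain ⟨u, hu⟩ := DirAux.Ld_surj μ (adjRates r μ) hμ hstat' hkerstar a g1 hg1sum
  have hA1 : ∑ x, μ x * u x * Ld (adjRates r μ) u x = u a - u b := by
    calc ∑ x, μ x * u x * Ld (adjRates r μ) u x = ∑ x, μ x * u x * g1 x :=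
        Finset.sum_congr rfl fun x _ => by rw [hu x]
      _ = u a - u b := hite u
  have hA2 : ∑ x, μ x * u x * Ld (adjRates r μ) u x = ∑ x, μ x * u x * Ld r u x :=
    DirAux.adjoint_id μ r hμ hstat u u
  have hco : u a - u b = ∑ x, μ x * u x * Ld r u x := by rw [← hA1, hA2]
  have h6 := DirAux.dirichlet_id μ r hstat u
  have h8 := DirAux.inner_neg μ u (fun x => Ld r u x)
  have h7 := DirAux.dir_nonneg μ r hμ hr u
  have hclt : u a - u b < 0 := by
    have hle2 : u a - u b ≤ 0 := by rw [hco]; linarith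
    rcases hle2.lt_or_eq with h | h
    · exact h
    · exfalso
      have h9 : ∑ x, μ x * u x * Ld r u x = 0 := by rw [← hco, h]
      have hd0 : ∑ x, ∑ y, μ x * r x y * (u y - u x) ^ 2 = 0 := by linarith
      have hz := DirAux.dir_zero_pairs μ r hμ hr u hd0
      have hconst := pairs_const u hz
      have h10 : Ld (adjRates r μ) u a = 0 := by
        rw [Ld]
        apply Finset.sum_eq_zero
        intro y _
        rw [hconst y a, sub_self, mul_zero]
      rw [hu a] at h10
      simp only [hg1def] at h10
      simp only [if_true, if_neg hab, sub_zero] at h10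
      have hμa := hμ a
      rw [div_eq_zero_iff] at h10
      rcases h10 with h10 | h10
      · norm_num at h10
      · linarith
  have hcne : u a - u b ≠ 0 := ne_of_lt hclt
  set Vs : E → ℝ := fun z => (u z - u b) / (u a - u b) with hVsdef
  have hVsa : Vs a = 1 := div_self hcne
  have hVsb : Vs b = 0 := by simp only [hVsdef]; rw [sub_self, zero_div]
  have hLVs : ∀ x, Ld (adjRates r μ) Vs x = g1 x / (u a - u b) := by
    intro x
    calc Ld (adjRates r μ) Vs x
        = ∑ y, adjRates r μ x y * (u y - u x) / (u a - u b) := by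
          rw [Ld]
          refine Finset.sum_congr rfl fun y _ => ?_
          simp only [hVsdef]
          field_simp
          ring
      _ = (∑ y, adjRates r μ x y * (u y - u x)) / (u a - u b) := by rw [Finset.sum_div]
      _ = g1 x / (u a - u b) := by
          rw [show (∑ y, adjRates r μ x y * (u y - u x)) = g1 x from hu x]
  have hX1 : ∑ x, μ x * V x * Ld (adjRates r μ) Vs x = 1 / (u a - u b) := by
    calc ∑ x, μ x * V x * Ld (adjRates r μ) Vs x
        = ∑ x, μ x * V x * g1 x / (u a - u b) :=
          Finset.sum_congr rfl fun x _ => by rw [hLVs x]; ring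
      _ = (∑ x, μ x * V x * g1 x) / (u a - u b) := by rw [Finset.sum_div]
      _ = 1 / (u a - u b) := by rw [hite V, hVa, hVb]; ring
  have hX2 : ∑ x, μ x * V x * Ld (adjRates r μ) Vs x = ∑ x, μ x * Vs x * Ld r V x :=
    DirAux.adjoint_id μ r hμ hstat Vs V
  have hscalar : μ a * Ld r V a = 1 / (u a - u b) := by
    have h10 := hsupp Vs
    rw [hX2, h10, hVsa, hVsb] at hX1
    linarith [hX1]
  have hLeq : ∀ x, Ld (adjRates r μ) Vs x = Ld r V x := by
    intro x
    rw [hLVs x]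
    by_cases hxa : x = a
    · subst hxa
      simp only [hg1def]
      simp only [if_true, if_neg hab, sub_zero]
      have hμa := (hμ x).ne'
      field_simp at hscalar ⊢
      linarith [hscalar]
    · by_cases hxb : x = b
      · subst hxb
        simp only [hg1def]
        simp only [if_true, if_neg (Ne.symm hab), zero_sub]
        have hb2 : μ x * Ld r V x = -(1 / (u a - u x)) := by
          rw [← hscalar]
          linarith [hLVsum]
        have hμb := (hμ x).ne'
        field_simp at hb2 ⊢
        linarith [hb2]
      · rw [hVharm x hxa hxb]
        simp only [hg1def]
        rw [if_neg hxa, if_neg hxb]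
        norm_num
  constructor
  · -- membership
    refine ⟨fun z => (1 / 2 : ℝ) * V z + (1 / 2 : ℝ) * Vs z, V, ?_, ?_, ?_, ?_⟩
    · show (1 / 2 : ℝ) * V a + (1 / 2 : ℝ) * Vs a = 1
      rw [hVa, hVsa]; norm_num
    · show (1 / 2 : ℝ) * V b + (1 / 2 : ℝ) * Vs b = 0
      rw [hVb, hVsb]; norm_num
    · intro x
      rw [DirAux.Ld_comb, symOp, ← hLeq x]
      ring
    · exact (DirAux.quad_eq μ r hμ hstat V).symm
  · -- lower bound
    rintro v ⟨f, W, hfa, hfb, hSW, hveq⟩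
    have hBWV : ∑ x, μ x * W x * (-(symOp r μ V x)) = Cap := by
      rw [DirAux.sym_symm μ r hμ hstat W V]
      have e1 : ∑ x, μ x * V x * (-(symOp r μ W x))
          = -∑ x, μ x * V x * Ld (adjRates r μ) f x := by
        rw [← DirAux.inner_neg μ V (fun x => Ld (adjRates r μ) f x)]
        exact Finset.sum_congr rfl fun x _ => by rw [hSW x]
      rw [e1, DirAux.adjoint_id μ r hμ hstat f V, hsupp f, hfa, hfb, hCapA]
      ring
    have hBVV : ∑ x, μ x * V x * (-(symOp r μ V x)) = Cap :=
      DirAux.quad_eq μ r hμ hstat V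
    have hcs := DirAux.cs_ineq μ r hμ hr hstat W V
    rw [hBWV, hBVV, ← hveq] at hcs
    nlinarith [hCappos, hcs]
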